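/- For integers k, d, n ≥ 2 with n > 5·d·k·log₂ k, the inequality 2^(n/k) > Σ_{i=0}^{d−1} C(n,i) holds. -/

import Mathlib

/-- Numeric core: for `k ≥ 2` and `u > 5·log₂ k`, `1 + ln u + ln k < u · ln 2`. -/
lemma aux5 (k u : ℝ) (hk : 2 ≤ k) (hu : 5 * Real.logb 2 k < u) :
    1 + Real.log u + Real.log k < u * Real.log 2 := by
  have h2 : (0:ℝ) < Real.log 2 := Real.log_pos (by norm_num)
  have hl2 : (1:ℝ)/2 ≤ Real.log 2 := by
    have h := Real.log_le_sub_one_of_pos (x := 1/2) (by norm_num)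
    rw [show (1:ℝ)/2 = 2⁻¹ by norm_num, Real.log_inv] at h
    linarith
  have hlk : Real.log 2 ≤ Real.log k := Real.log_le_log (by norm_num) hk
  set I := Real.log k / Real.log 2 with hI
  have hI1 : 1 ≤ I := (one_le_div h2).mpr hlk
  have hku : 5 * I < u := by
    rwa [Real.logb, ← hI] at hu
  have hLk : Real.log k = I * Real.log 2 := by rw [hI, div_mul_cancel₀ _ h2.ne']
  have hu5 : 5 ≤ u := by nlinarith
  have hupos : (0:ℝ) < u := by linarith
  have hlu : Real.log u ≤ Real.log 5 + u/5 - 1 := by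
    have h := Real.log_le_sub_one_of_pos (x := u/5) (by positivity)
    rw [Real.log_div (by positivity) (by norm_num)] at h
    linarith
  have h5 : Real.log 5 ≤ 4 * Real.log 2 - 1 := by
    have h16 : (4:ℝ) * Real.log 2 = Real.log 16 := by
      rw [show (16:ℝ) = 2^(4:ℕ) by norm_num, Real.log_pow]; push_cast; ring
    have hd : Real.log 16 - Real.log 5 = Real.log (16/5) :=
      (Real.log_div (by norm_num) (by norm_num)).symm
    have h1 : 1 ≤ Real.log (16/5) := by
      rw [Real.le_log_iff_exp_le (by norm_num)]
      have := Real.exp_one_lt_d9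
      norm_num at this ⊢
      linarith
    linarith
  rw [hLk]
  nlinarith [mul_le_mul_of_nonneg_right hI1 (by linarith : (0:ℝ) ≤ 4*Real.log 2 - 1),
    mul_lt_mul_of_pos_right hku (by linarith : (0:ℝ) < Real.log 2 - 1/5)]

/-- For integers `k, d, n ≥ 2` with `n > 5·d·k·log₂ k`,
`2^(n/k) > Σ_{i=0}^{d-1} C(n,i)`. -/
theorem stmt5 (k d n : ℕ) (hk : 2 ≤ k) (hd : 2 ≤ d) (hn : 2 ≤ n)
    (h : 5 * (d : ℝ) * k * Real.logb 2 k < n) :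
    ∑ i ∈ Finset.range d, (n.choose i : ℝ) < (2 : ℝ) ^ ((n : ℝ) / k) := by
  have h2 : (0:ℝ) < Real.log 2 := Real.log_pos (by norm_num)
  have hkR : (2:ℝ) ≤ (k:ℕ) := by exact_mod_cast hk
  have hdR : (2:ℝ) ≤ (d:ℕ) := by exact_mod_cast hd
  have hlogb1 : (1:ℝ) ≤ Real.logb 2 k := by
    rw [Real.le_logb_iff_rpow_le (by norm_num) (by linarith)]
    simpa using hkR
  set c : ℝ := (d:ℝ) - 1 with hc
  have hc1 : (1:ℝ) ≤ c := by simp [hc]; linarith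
  have hc0 : (0:ℝ) < c := by linarith
  have hk0 : (0:ℝ) < (k:ℝ) := by linarith
  have hck : (0:ℝ) < c * k := by positivity
  -- n is big
  have hkl : (2:ℝ) ≤ (k:ℝ) * Real.logb 2 k := by nlinarith
  have hn10 : 10 * (d:ℝ) ≤ (n:ℝ) := by nlinarith
  have hn0 : (0:ℝ) < n := by linarith
  have hdn : d ≤ n := by
    have : (d:ℝ) ≤ (n:ℝ) := by linarith
    exact_mod_cast this
  set u : ℝ := (n:ℝ) / (c * k) with hu
  have huk : 5 * Real.logb 2 k < u := by
    rw [hu, lt_div_iff₀ hck]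
    nlinarith
  have hupos : (0:ℝ) < u := by positivity
  have key := aux5 k u hkR huk
  set x : ℝ := c / n with hx
  have hx0 : (0:ℝ) < x := by positivity
  have hx1 : x ≤ 1 := by
    rw [hx, div_le_one hn0]; linarith
  set S : ℝ := ∑ i ∈ Finset.range d, (n.choose i : ℝ) with hS
  have key1 : S * x ^ (d-1) ≤ Real.exp c := by
    have e2 : ∑ i ∈ Finset.range d, (n.choose i : ℝ) * x ^ (d-1)
        ≤ ∑ i ∈ Finset.range d, (n.choose i : ℝ) * x ^ i := by
      refine Finset.sum_le_sum fun i hi => ?_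
      refine mul_le_mul_of_nonneg_left ?_ (by positivity)
      exact pow_le_pow_of_le_one hx0.le hx1 (by have := Finset.mem_range.mp hi; omega)
    have e3 : ∑ i ∈ Finset.range d, (n.choose i : ℝ) * x ^ i
        ≤ ∑ i ∈ Finset.range (n+1), (n.choose i : ℝ) * x ^ i :=
      Finset.sum_le_sum_of_subset_of_nonneg (Finset.range_subset_range.mpr (by omega))
        (fun i _ _ => by positivity)
    have e4 : ∑ i ∈ Finset.range (n+1), (n.choose i : ℝ) * x ^ i = (x + 1) ^ n := by
      rw [add_pow]
      refine Finset.sum_congr rfl fun i hi => ?_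
      rw [one_pow]; ring
    have e5 : (x + 1) ^ n ≤ Real.exp c := by
      have hb : x + 1 ≤ Real.exp x := by linarith [Real.add_one_le_exp x]
      calc (x + 1) ^ n ≤ (Real.exp x) ^ n := pow_le_pow_left₀ (by positivity) hb n
        _ = Real.exp (n * x) := (Real.exp_nat_mul x n).symm
        _ = Real.exp c := by
            congr 1
            rw [hx]; field_simp
    calc S * x ^ (d-1) = ∑ i ∈ Finset.range d, (n.choose i : ℝ) * x ^ (d-1) :=
          Finset.sum_mul _ _ _
      _ ≤ ∑ i ∈ Finset.range d, (n.choose i : ℝ) * x ^ i := e2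
      _ ≤ ∑ i ∈ Finset.range (n+1), (n.choose i : ℝ) * x ^ i := e3
      _ = (x + 1) ^ n := e4
      _ ≤ Real.exp c := e5
  have hxp : (0:ℝ) < x ^ (d-1) := by positivity
  have key2 : S ≤ Real.exp c * ((n:ℝ)/c) ^ (d-1) := by
    have h' : S ≤ Real.exp c / x ^ (d-1) := (le_div_iff₀ hxp).mpr key1
    rwa [div_eq_mul_inv, ← inv_pow, hx, inv_div] at h'
  have hR : Real.exp c * ((n:ℝ)/c) ^ (d-1) < (2:ℝ) ^ ((n:ℝ)/k) := by
    have hLpos : (0:ℝ) < Real.exp c * ((n:ℝ)/c) ^ (d-1) := by positivity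
    rw [← Real.log_lt_log_iff hLpos (by positivity)]
    rw [Real.log_rpow (by norm_num), Real.log_mul (by positivity) (by positivity),
      Real.log_exp, Real.log_pow]
    have hcast : ((d-1 : ℕ) : ℝ) = c := by
      rw [Nat.cast_sub (by omega)]; simp [hc]
    have hnc : (n:ℝ)/c = u * k := by
      rw [hu]; field_simp
    have hnk : (n:ℝ)/k = c * u := by
      rw [hu]; field_simp
    rw [hcast, hnc, Real.log_mul (by positivity) (by positivity), hnk]
    nlinarith [mul_lt_mul_of_pos_left key hc0]
  exact lt_of_le_of_lt key2 hR
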